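/- arXiv:2103.01433 — 2 statements merged into one kernel-verified Lean document; each statement's English description precedes it below -/
import Mathlib

section
/- Let n ≥ 1 be an integer and q > 0. Define Φ(q, z) := ∫_0^∞ e^{−v} (1 + q v)^{−n} e^{−z/(1+qv)} dv and ζ(q, n) := −1 + ∫_0^∞ (z^{n−1}/(n−1)!) e^{−2z}/Φ(q, z) dz. Then ∫_0^∞ (z^{n−1}/(n−1)!) Φ(q, z) (1 − e^{−z}/Φ(q, z))² dz = ζ(q, n), and ζ(q, n) > 0. -/
open MeasureTheory Real Set

/-- `Phi n x z = ∫_0^∞ e^{−v} (1 + x v)^{−n} e^{−z/(1+xv)} dv`. -/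
noncomputable def Phi (n : ℕ) (x z : ℝ) : ℝ :=
  ∫ v in Set.Ioi (0 : ℝ),
    Real.exp (-v) * (1 + x * v) ^ (-(n : ℤ)) * Real.exp (-z / (1 + x * v))

open scoped ENNReal

section aux
variable {n : ℕ} {q : ℝ} (hn : 1 ≤ n) (hq : 0 < q)
include hq

lemma one_add_pos {v : ℝ} (hv : 0 ≤ v) : 0 < 1 + q * v := by nlinarith

/-- the integrand in v -/
noncomputable def phiInt (n : ℕ) (q z v : ℝ) : ℝ :=
  Real.exp (-v) * (1 + q * v) ^ (-(n : ℤ)) * Real.exp (-z / (1 + q * v))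

lemma phiInt_pos {z v : ℝ} (hv : 0 ≤ v) : 0 < phiInt n q z v := by
  have h := one_add_pos hq hv
  unfold phiInt
  positivity

lemma phiInt_le {z v : ℝ} (hz : 0 ≤ z) (hv : 0 ≤ v) :
    phiInt n q z v ≤ Real.exp (-v) := by
  have h := one_add_pos hq hv
  have h1 : (1 + q * v) ^ (-(n : ℤ)) ≤ 1 := by
    rw [zpow_neg, zpow_natCast]
    rw [inv_le_one_iff₀]
    right
    exact one_le_pow₀ (by nlinarith)
  have h2 : Real.exp (-z / (1 + q * v)) ≤ 1 := by
    rw [Real.exp_le_one_iff]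
    exact div_nonpos_of_nonpos_of_nonneg (by linarith) h.le
  calc Real.exp (-v) * (1 + q * v) ^ (-(n : ℤ)) * Real.exp (-z / (1 + q * v))
      ≤ Real.exp (-v) * 1 * 1 := by
        apply mul_le_mul _ h2 (Real.exp_pos _).le (by positivity)
        apply mul_le_mul_of_nonneg_left h1 (Real.exp_pos _).le
    _ = Real.exp (-v) := by ring

lemma phiInt_contOn (z : ℝ) : ContinuousOn (phiInt n q z) (Ioi 0) := by
  have hne : ∀ v ∈ Ioi (0:ℝ), 1 + q * v ≠ 0 := fun v hv => (one_add_pos hq (le_of_lt hv)).ne'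
  apply ContinuousOn.mul
  · apply ContinuousOn.mul
    · exact (Real.continuous_exp.comp continuous_neg).continuousOn
    · exact (continuousOn_const.add (continuousOn_const.mul continuousOn_id)).zpow₀ _
        (fun v hv => Or.inl (hne v hv))
  · apply Real.continuous_exp.comp_continuousOn
    exact ContinuousOn.div continuousOn_const
      (continuousOn_const.add (continuousOn_const.mul continuousOn_id)) hne

omit hq in lemma exp_neg_int : IntegrableOn (fun v : ℝ => Real.exp (-v)) (Ioi 0) := by
  simpa using exp_neg_integrableOn_Ioi 0 one_pos

lemma phiInt_integrable {z : ℝ} (hz : 0 ≤ z) :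
    IntegrableOn (phiInt n q z) (Ioi 0) := by
  apply Integrable.mono exp_neg_int ((phiInt_contOn hq z).aestronglyMeasurable measurableSet_Ioi)
  filter_upwards [ae_restrict_mem measurableSet_Ioi] with v hv
  rw [Real.norm_eq_abs, Real.norm_eq_abs, abs_of_pos (phiInt_pos hq (le_of_lt hv)),
    abs_of_pos (Real.exp_pos _)]
  exact phiInt_le hq hz (le_of_lt hv)

omit hq in lemma Phi_eq (z : ℝ) : Phi n q z = ∫ v in Ioi (0:ℝ), phiInt n q z v := rfl

lemma Phi_pos {z : ℝ} (hz : 0 ≤ z) : 0 < Phi n q z := by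
  rw [Phi_eq]
  rw [setIntegral_pos_iff_support_of_nonneg_ae _ (phiInt_integrable hq hz)]
  · have : Ioi (0:ℝ) ⊆ Function.support (phiInt n q z) ∩ Ioi 0 := by
      intro v hv
      exact ⟨(phiInt_pos hq (le_of_lt hv)).ne', hv⟩
    calc (0:ℝ≥0∞) < volume (Ioi (0:ℝ)) := by simp
      _ ≤ _ := measure_mono this
  · filter_upwards [ae_restrict_mem measurableSet_Ioi] with v hv
    exact (phiInt_pos hq (le_of_lt hv)).le
lemma Phi_le_Phi0 {z : ℝ} (hz : 0 ≤ z) : Phi n q z ≤ Phi n q 0 := by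
  rw [Phi_eq, Phi_eq]
  apply setIntegral_mono_on (phiInt_integrable hq hz) (phiInt_integrable hq le_rfl)
    measurableSet_Ioi
  intro v hv
  have h := one_add_pos hq (le_of_lt (mem_Ioi.mp hv))
  unfold phiInt
  apply mul_le_mul_of_nonneg_left _ (by positivity)
  apply Real.exp_le_exp.mpr
  rw [neg_zero, zero_div]
  exact div_nonpos_of_nonpos_of_nonneg (by linarith) h.le

include hn in lemma Phi0_lt_one : Phi n q 0 < 1 := by
  have key : 0 < ∫ v in Ioi (0:ℝ), (Real.exp (-v) - phiInt n q 0 v) := by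
    rw [setIntegral_pos_iff_support_of_nonneg_ae]
    · have hsub : Ioi (0:ℝ) ⊆ Function.support (fun v => Real.exp (-v) - phiInt n q 0 v) ∩ Ioi 0 := by
        intro v hv
        refine ⟨?_, hv⟩
        have hv' := mem_Ioi.mp hv
        have h := one_add_pos hq hv'.le
        have h1 : (1 + q * v) ^ (-(n : ℤ)) < 1 := by
          rw [zpow_neg, zpow_natCast, inv_lt_one_iff₀]
          right
          exact one_lt_pow₀ (by nlinarith) (by omega : n ≠ 0)
        have : phiInt n q 0 v < Real.exp (-v) := by
          unfold phiInt
          rw [neg_zero, zero_div, Real.exp_zero, mul_one]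
          nlinarith [Real.exp_pos (-v)]
        simp only [Function.mem_support]
        intro hc
        nlinarith
      calc (0:ℝ≥0∞) < volume (Ioi (0:ℝ)) := by simp
        _ ≤ _ := measure_mono hsub
    · filter_upwards [ae_restrict_mem measurableSet_Ioi] with v hv
      simp only [Pi.zero_apply, sub_nonneg]
      exact phiInt_le hq le_rfl (le_of_lt hv)
    · exact exp_neg_int.sub (phiInt_integrable hq le_rfl)
  have := integral_sub exp_neg_int (phiInt_integrable (n:=n) hq (le_refl (0:ℝ)))
  rw [this] at key
  rw [Phi_eq]
  have h1 : (∫ v in Ioi (0:ℝ), Real.exp (-v)) = 1 := by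
    simpa using integral_exp_neg_Ioi 0
  linarith

lemma Phi_ge {z : ℝ} (hz : 0 ≤ z) : Phi n q 0 * Real.exp (-z) ≤ Phi n q z := by
  rw [Phi_eq, Phi_eq, ← integral_mul_const]
  apply setIntegral_mono_on ((phiInt_integrable hq le_rfl).mul_const _)
    (phiInt_integrable hq hz) measurableSet_Ioi
  intro v hv
  have h := one_add_pos hq (le_of_lt (mem_Ioi.mp hv))
  unfold phiInt
  rw [neg_zero, zero_div, Real.exp_zero, mul_one]
  apply mul_le_mul_of_nonneg_left _ (by positivity)
  apply Real.exp_le_exp.mpr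
  rw [neg_div, neg_le_neg_iff]
  exact div_le_self hz (by nlinarith [mem_Ioi.mp hv])
omit hq in
include hn in
lemma gamma_val {r : ℝ} (hr : 0 < r) :
    ∫ z in Ioi (0:ℝ), z ^ (n - 1) * Real.exp (-(r * z))
      = (1 / r) ^ n * (Nat.factorial (n - 1) : ℝ) := by
  have h1 := integral_rpow_mul_exp_neg_mul_Ioi (a := (n:ℝ)) (r := r)
    (by exact_mod_cast Nat.pos_of_ne_zero (by omega)) hr
  have hcast : ((n - 1 : ℕ) : ℝ) = (n : ℝ) - 1 := by
    push_cast [Nat.cast_sub hn]; ring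
  have h2 : ∀ z ∈ Ioi (0:ℝ), z ^ ((n:ℝ) - 1) * Real.exp (-(r * z))
      = z ^ (n - 1) * Real.exp (-(r * z)) := by
    intro z hz
    rw [← hcast, Real.rpow_natCast]
  rw [setIntegral_congr_fun measurableSet_Ioi h2] at h1
  rw [h1]
  congr 1
  · rw [← Real.rpow_natCast]
  · rw [show (n:ℝ) = ((n-1:ℕ):ℝ) + 1 by rw [hcast]; ring]
    exact Real.Gamma_nat_eq_factorial (n-1)

omit hq in
include hn in
lemma gamma_integrable {r : ℝ} (hr : 0 < r) :
    IntegrableOn (fun z : ℝ => z ^ (n - 1) * Real.exp (-(r * z))) (Ioi 0) := by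
  have hs1 : (-1:ℝ) < (n:ℝ) - 1 := by
    have h : (1:ℝ) ≤ (n:ℝ) := by exact_mod_cast hn
    linarith
  have := integrableOn_rpow_mul_exp_neg_mul_rpow
    (s := ((n:ℝ) - 1)) (p := 1) (b := r) hs1 one_pos hr
  apply this.congr_fun _ measurableSet_Ioi
  intro z hz
  have hz' := mem_Ioi.mp hz
  simp only [Real.rpow_one, neg_mul]
  congr 1
  rw [show ((n:ℝ) - 1) = ((n - 1 : ℕ) : ℝ) by push_cast [Nat.cast_sub hn]; ring,
    Real.rpow_natCast]
/-- Full Fubini integrand. -/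
noncomputable def FF (n : ℕ) (q : ℝ) (z v : ℝ) : ℝ :=
  z ^ (n - 1) / (Nat.factorial (n - 1) : ℝ) * phiInt n q z v

omit hq in
lemma FF_eq (z v : ℝ) :
    FF n q z v = (Real.exp (-v) * (1 + q * v) ^ (-(n : ℤ)) / (Nat.factorial (n - 1) : ℝ)) *
      (z ^ (n - 1) * Real.exp (-((1 + q * v)⁻¹ * z))) := by
  unfold FF phiInt
  have : -z / (1 + q * v) = -((1 + q * v)⁻¹ * z) := by
    rw [div_eq_mul_inv]; ring
  rw [this]
  ring

include hn in
lemma FF_int_z {v : ℝ} (hv : 0 < v) :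
    IntegrableOn (fun z => FF n q z v) (Ioi 0) := by
  have h := one_add_pos hq hv.le
  have hr : 0 < (1 + q * v)⁻¹ := inv_pos.mpr h
  have := (gamma_integrable hn hr).const_mul
    (Real.exp (-v) * (1 + q * v) ^ (-(n : ℤ)) / (Nat.factorial (n - 1) : ℝ))
  exact IntegrableOn.congr_fun this (fun z _ => (FF_eq z v).symm) measurableSet_Ioi

include hn in
lemma FF_integral_z {v : ℝ} (hv : 0 < v) :
    ∫ z in Ioi (0:ℝ), FF n q z v = Real.exp (-v) := by
  have h := one_add_pos hq hv.le
  have hr : 0 < (1 + q * v)⁻¹ := inv_pos.mpr h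
  have hcalc : ∫ z in Ioi (0:ℝ), FF n q z v
      = (Real.exp (-v) * (1 + q * v) ^ (-(n : ℤ)) / (Nat.factorial (n - 1) : ℝ)) *
        ∫ z in Ioi (0:ℝ), (z ^ (n - 1) * Real.exp (-((1 + q * v)⁻¹ * z))) := by
    rw [← integral_const_mul]
    exact setIntegral_congr_fun measurableSet_Ioi (fun z _ => FF_eq z v)
  rw [hcalc, gamma_val hn hr, one_div, inv_inv]
  have hfac : (Nat.factorial (n - 1) : ℝ) ≠ 0 := Nat.cast_ne_zero.mpr (Nat.factorial_ne_zero _)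
  have hzp : (1 + q * v) ^ (-(n : ℤ)) * (1 + q * v) ^ n = 1 := by
    rw [zpow_neg, zpow_natCast]
    exact inv_mul_cancel₀ (pow_ne_zero _ h.ne')
  field_simp
  rw [mul_comm v q]; exact hzp

include hn in
lemma FF_prod_integrable :
    Integrable (Function.uncurry (FF n q))
      ((volume.restrict (Ioi (0:ℝ))).prod (volume.restrict (Ioi (0:ℝ)))) := by
  have hmeas : AEStronglyMeasurable (Function.uncurry (FF n q))
      ((volume.restrict (Ioi (0:ℝ))).prod (volume.restrict (Ioi (0:ℝ)))) := by
    rw [Measure.prod_restrict]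
    apply ContinuousOn.aestronglyMeasurable _ (measurableSet_Ioi.prod measurableSet_Ioi)
    have hne : ∀ p : ℝ × ℝ, p ∈ Ioi (0:ℝ) ×ˢ Ioi (0:ℝ) → 1 + q * p.2 ≠ 0 :=
      fun p hp => (one_add_pos hq (le_of_lt hp.2)).ne'
    apply ContinuousOn.mul
    · exact ((continuousOn_fst.pow _).div_const _)
    · unfold phiInt
      apply ContinuousOn.mul
      · apply ContinuousOn.mul
        · exact (Real.continuous_exp.comp continuous_neg).comp_continuousOn continuousOn_snd
        · exact (continuousOn_const.add (continuousOn_const.mul continuousOn_snd)).zpow₀ _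
            (fun p hp => Or.inl (hne p hp))
      · apply Real.continuous_exp.comp_continuousOn
        exact ContinuousOn.div (continuousOn_fst.neg)
          (continuousOn_const.add (continuousOn_const.mul continuousOn_snd)) hne
  rw [integrable_prod_iff' hmeas]
  constructor
  · filter_upwards [ae_restrict_mem measurableSet_Ioi] with v hv
    exact FF_int_z hn hq hv
  · apply Integrable.congr exp_neg_int
    filter_upwards [ae_restrict_mem measurableSet_Ioi] with v hv
    rw [← FF_integral_z hn hq hv]
    refine (setIntegral_congr_fun measurableSet_Ioi (fun z hz => ?_)).symm
    have h := one_add_pos hq (le_of_lt hv)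
    have hpi := phiInt_pos (n := n) (z := z) hq (le_of_lt hv)
    have hz' := le_of_lt (mem_Ioi.mp hz)
    have h0 : 0 ≤ FF n q z v := by
      unfold FF
      exact mul_nonneg (by positivity) hpi.le
    show ‖FF n q z v‖ = FF n q z v
    rw [Real.norm_eq_abs, abs_of_nonneg h0]

include hn in
lemma key1 : ∫ z in Ioi (0:ℝ), z ^ (n - 1) / (Nat.factorial (n - 1) : ℝ) * Phi n q z = 1 := by
  have step1 : ∀ z : ℝ, z ^ (n - 1) / (Nat.factorial (n - 1) : ℝ) * Phi n q z
      = ∫ v in Ioi (0:ℝ), FF n q z v := by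
    intro z
    rw [Phi_eq, ← integral_const_mul]
    rfl
  calc ∫ z in Ioi (0:ℝ), z ^ (n - 1) / (Nat.factorial (n - 1) : ℝ) * Phi n q z
      = ∫ z in Ioi (0:ℝ), ∫ v in Ioi (0:ℝ), FF n q z v := by
        exact setIntegral_congr_fun measurableSet_Ioi (fun z _ => step1 z)
    _ = ∫ v in Ioi (0:ℝ), ∫ z in Ioi (0:ℝ), FF n q z v :=
        integral_integral_swap (FF_prod_integrable hn hq)
    _ = ∫ v in Ioi (0:ℝ), Real.exp (-v) :=
        setIntegral_congr_fun measurableSet_Ioi (fun v hv => FF_integral_z hn hq hv)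
    _ = 1 := by simpa using integral_exp_neg_Ioi 0

include hn in
lemma intA : IntegrableOn
    (fun z => z ^ (n - 1) / (Nat.factorial (n - 1) : ℝ) * Phi n q z) (Ioi 0) := by
  have := (FF_prod_integrable hn hq).integral_prod_left
  apply this.congr
  filter_upwards with z
  rw [Phi_eq, ← integral_const_mul]
  rfl
omit hq in
include hn in
lemma intB : IntegrableOn
    (fun z : ℝ => z ^ (n - 1) / (Nat.factorial (n - 1) : ℝ) * Real.exp (-z)) (Ioi 0) := by
  have := (gamma_integrable hn one_pos).const_mul ((Nat.factorial (n - 1) : ℝ))⁻¹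
  apply IntegrableOn.congr_fun this _ measurableSet_Ioi
  intro z _
  simp only [one_mul]
  ring

omit hq in
include hn in
lemma valB : ∫ z in Ioi (0:ℝ),
    z ^ (n - 1) / (Nat.factorial (n - 1) : ℝ) * Real.exp (-z) = 1 := by
  have h : ∀ z ∈ Ioi (0:ℝ), z ^ (n - 1) / (Nat.factorial (n - 1) : ℝ) * Real.exp (-z)
      = ((Nat.factorial (n - 1) : ℝ))⁻¹ * (z ^ (n - 1) * Real.exp (-(1 * z))) := by
    intro z _
    rw [one_mul]; ring
  rw [setIntegral_congr_fun measurableSet_Ioi h, integral_const_mul, gamma_val hn one_pos]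
  have hfac : (Nat.factorial (n - 1) : ℝ) ≠ 0 := Nat.cast_ne_zero.mpr (Nat.factorial_ne_zero _)
  field_simp
  exact one_pow n

include hn in
lemma Phi_meas : AEStronglyMeasurable (fun z => Phi n q z) (volume.restrict (Ioi (0:ℝ))) := by
  have h1 := ((FF_prod_integrable hn hq).integral_prod_left).aestronglyMeasurable
  have h2 : AEStronglyMeasurable
      (fun z : ℝ => (Nat.factorial (n - 1) : ℝ) / z ^ (n - 1) * ∫ v in Ioi (0:ℝ), FF n q z v)
      (volume.restrict (Ioi (0:ℝ))) :=
    ((measurable_const.div (measurable_id.pow_const _)).aestronglyMeasurable).mul h1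
  apply h2.congr
  filter_upwards [ae_restrict_mem measurableSet_Ioi] with z hz
  have hz' : (0:ℝ) < z := hz
  have hzn : z ^ (n - 1) ≠ 0 := pow_ne_zero _ hz'.ne'
  have hfac : (Nat.factorial (n - 1) : ℝ) ≠ 0 := Nat.cast_ne_zero.mpr (Nat.factorial_ne_zero _)
  have : (∫ v in Ioi (0:ℝ), FF n q z v)
      = z ^ (n - 1) / (Nat.factorial (n - 1) : ℝ) * Phi n q z := by
    rw [Phi_eq, ← integral_const_mul]
    rfl
  rw [this]
  field_simp

include hn in
lemma intC : IntegrableOn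
    (fun z : ℝ => z ^ (n - 1) / (Nat.factorial (n - 1) : ℝ) * Real.exp (-(2 * z)) / Phi n q z)
    (Ioi 0) := by
  have hP0 := Phi_pos (n := n) hq (le_refl (0:ℝ))
  apply Integrable.mono ((intB hn).const_mul (Phi n q 0)⁻¹)
  · have hmeas := (Phi_meas hn hq).aemeasurable
    refine (AEMeasurable.div ?_ hmeas).aestronglyMeasurable
    exact (((measurable_id.pow_const _).div_const _).mul
      (Real.measurable_exp.comp (measurable_const.mul measurable_id).neg)).aemeasurable
  · filter_upwards [ae_restrict_mem measurableSet_Ioi] with z hz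
    have hz' : (0:ℝ) < z := hz
    have hP := Phi_pos (n := n) hq hz'.le
    have hge := Phi_ge (n := n) hq hz'.le
    rw [Real.norm_eq_abs, Real.norm_eq_abs, abs_of_nonneg, abs_of_nonneg]
    · have h2 : Real.exp (-(2 * z)) = Real.exp (-z) * Real.exp (-z) := by
        rw [← Real.exp_add]; ring_nf
      rw [h2]
      rw [div_le_iff₀ hP]
      have hw : 0 ≤ z ^ (n - 1) / (Nat.factorial (n - 1) : ℝ) := by positivity
      calc z ^ (n - 1) / (Nat.factorial (n - 1) : ℝ) * (Real.exp (-z) * Real.exp (-z))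
          = (z ^ (n - 1) / (Nat.factorial (n - 1) : ℝ) * Real.exp (-z)) * Real.exp (-z) := by ring
        _ ≤ (z ^ (n - 1) / (Nat.factorial (n - 1) : ℝ) * Real.exp (-z)) *
              ((Phi n q 0)⁻¹ * Phi n q z) := by
            apply mul_le_mul_of_nonneg_left _ (by positivity)
            rw [le_inv_mul_iff₀ hP0]
            exact hge
        _ = (Phi n q 0)⁻¹ * (z ^ (n - 1) / (Nat.factorial (n - 1) : ℝ) * Real.exp (-z)) *
              Phi n q z := by ring
    · positivity
    · positivity
end aux

theorem stmt_10 (n : ℕ) (hn : 1 ≤ n) (q : ℝ) (hq : 0 < q) (ζ : ℝ)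
    (hζ : ζ = -1 + ∫ z in Set.Ioi (0 : ℝ),
      z ^ (n - 1) / (Nat.factorial (n - 1) : ℝ) * Real.exp (-(2 * z)) / Phi n q z) :
    (∫ z in Set.Ioi (0 : ℝ),
        z ^ (n - 1) / (Nat.factorial (n - 1) : ℝ) * Phi n q z *
          (1 - Real.exp (-z) / Phi n q z) ^ 2 = ζ) ∧
    0 < ζ := by
  have hP0 := Phi_pos (n := n) hq (le_refl (0:ℝ))
  have hpt : ∀ z ∈ Ioi (0:ℝ),
      z ^ (n - 1) / (Nat.factorial (n - 1) : ℝ) * Phi n q z *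
          (1 - Real.exp (-z) / Phi n q z) ^ 2
      = z ^ (n - 1) / (Nat.factorial (n - 1) : ℝ) * Phi n q z
        - 2 * (z ^ (n - 1) / (Nat.factorial (n - 1) : ℝ) * Real.exp (-z))
        + z ^ (n - 1) / (Nat.factorial (n - 1) : ℝ) * Real.exp (-(2 * z)) / Phi n q z := by
    intro z hz
    have hP := (Phi_pos (n := n) hq (le_of_lt (mem_Ioi.mp hz))).ne'
    have h2 : Real.exp (-(2 * z)) = Real.exp (-z) * Real.exp (-z) := by
      rw [← Real.exp_add]; ring_nf
    rw [h2]
    have hfac : (Nat.factorial (n - 1) : ℝ) ≠ 0 := Nat.cast_ne_zero.mpr (Nat.factorial_ne_zero _)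
    field_simp
    ring
  have hintA := intA hn hq
  have hintB := intB (n := n) hn
  have hintC := intC hn hq
  have h2B : IntegrableOn
      (fun z : ℝ => 2 * (z ^ (n - 1) / (Nat.factorial (n - 1) : ℝ) * Real.exp (-z)))
      (Ioi 0) := hintB.const_mul 2
  have hAB : IntegrableOn (fun z : ℝ => z ^ (n - 1) / (Nat.factorial (n - 1) : ℝ) * Phi n q z
      - 2 * (z ^ (n - 1) / (Nat.factorial (n - 1) : ℝ) * Real.exp (-z))) (Ioi 0) :=
    hintA.sub h2B
  have hABC : IntegrableOn (fun z : ℝ => z ^ (n - 1) / (Nat.factorial (n - 1) : ℝ) * Phi n q z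
      - 2 * (z ^ (n - 1) / (Nat.factorial (n - 1) : ℝ) * Real.exp (-z))
      + z ^ (n - 1) / (Nat.factorial (n - 1) : ℝ) * Real.exp (-(2 * z)) / Phi n q z) (Ioi 0) :=
    hAB.add hintC
  have eq1 : (∫ z in Set.Ioi (0 : ℝ),
      z ^ (n - 1) / (Nat.factorial (n - 1) : ℝ) * Phi n q z *
        (1 - Real.exp (-z) / Phi n q z) ^ 2) = ζ := by
    rw [setIntegral_congr_fun measurableSet_Ioi hpt,
      integral_add hAB hintC,
      integral_sub hintA h2B, integral_const_mul, key1 hn hq, valB (n := n) hn]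
    rw [hζ]
    ring
  refine ⟨eq1, ?_⟩
  rw [← eq1]
  have hGint : IntegrableOn (fun z => z ^ (n - 1) / (Nat.factorial (n - 1) : ℝ) * Phi n q z *
      (1 - Real.exp (-z) / Phi n q z) ^ 2) (Ioi 0) :=
    hABC.congr_fun (fun z hz => (hpt z hz).symm) measurableSet_Ioi
  rw [setIntegral_pos_iff_support_of_nonneg_ae _ hGint]
  · have hc1 : Phi n q 0 < 1 := Phi0_lt_one hn hq
    have hδ : 0 < -Real.log (Phi n q 0) := by
      have := Real.log_neg hP0 hc1
      linarith
    have hsub : Ioo (0:ℝ) (-Real.log (Phi n q 0)) ⊆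
        Function.support (fun z => z ^ (n - 1) / (Nat.factorial (n - 1) : ℝ) * Phi n q z *
          (1 - Real.exp (-z) / Phi n q z) ^ 2) ∩ Ioi 0 := by
      intro z hz
      obtain ⟨hz1, hz2⟩ := hz
      refine ⟨?_, hz1⟩
      have hP := Phi_pos (n := n) hq hz1.le
      have hle : Phi n q z ≤ Phi n q 0 := Phi_le_Phi0 hq hz1.le
      have hexp : Phi n q 0 < Real.exp (-z) := by
        have : Real.log (Phi n q 0) < -z := by linarith
        calc Phi n q 0 = Real.exp (Real.log (Phi n q 0)) := (Real.exp_log hP0).symm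
          _ < Real.exp (-z) := Real.exp_lt_exp.mpr this
      have hr : 1 < Real.exp (-z) / Phi n q z := by
        rw [lt_div_iff₀ hP]
        linarith
      have hsq : 0 < (1 - Real.exp (-z) / Phi n q z) ^ 2 := by nlinarith
      have hw : 0 < z ^ (n - 1) / (Nat.factorial (n - 1) : ℝ) := by positivity
      exact (mul_pos (mul_pos hw hP) hsq).ne'
    calc (0:ℝ≥0∞) < volume (Ioo (0:ℝ) (-Real.log (Phi n q 0))) := by
          rw [Real.volume_Ioo]
          exact ENNReal.ofReal_pos.mpr (by linarith)
      _ ≤ _ := measure_mono hsub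
  · filter_upwards [ae_restrict_mem measurableSet_Ioi] with z hz
    have hP := Phi_pos (n := n) hq (le_of_lt (mem_Ioi.mp hz))
    have hz' := le_of_lt (mem_Ioi.mp hz)
    positivity
end

section
/- Let n ≥ 1 be an integer and q > 0. For 0 < p < q define D(p) := −∫_0^∞ (z^{n−1}/(n−1)!) Φ(q, z) ln Ψ(p, q, z) dz, where Ψ(p, q, z) := 1 + (p/(q−p))(1 − Φ(p, z)/Φ(q, z)) and Φ(x, z) := ∫_0^∞ e^{−v} (1 + x v)^{−n} e^{−z/(1+xv)} dv. Then lim_{p→0⁺} D(p)/p² = ζ(q, n)/(2q²), where ζ(q, n) := −1 + ∫_0^∞ (z^{n−1}/(n−1)!) e^{−2z}/Φ(q, z) dz. -/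
open MeasureTheory Real Set Filter

namespace S11

/-- The integrand, with `zpow` replaced by `inv ∘ pow`. -/
noncomputable def J (n : ℕ) (x z v : ℝ) : ℝ :=
  Real.exp (-v) * ((1 + x * v) ^ n)⁻¹ * Real.exp (-z / (1 + x * v))

lemma Phi_eq (n : ℕ) (x z : ℝ) : Phi n x z = ∫ v in Set.Ioi (0 : ℝ), J n x z v := by
  unfold Phi J
  congr 1
  funext v
  rw [zpow_neg, zpow_natCast]

lemma one_add_pos {x v : ℝ} (hx : 0 ≤ x) (hv : 0 ≤ v) : (0:ℝ) < 1 + x * v := by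
  nlinarith

lemma J_nonneg {n : ℕ} {x z v : ℝ} (hx : 0 ≤ x) (hv : 0 ≤ v) : 0 ≤ J n x z v := by
  have := one_add_pos hx hv
  unfold J
  positivity

lemma J_le_exp {n : ℕ} {x z v : ℝ} (hx : 0 ≤ x) (hz : 0 ≤ z) (hv : 0 ≤ v) :
    J n x z v ≤ Real.exp (-v) := by
  have h1 := one_add_pos hx hv
  have h2 : ((1 + x * v) ^ n)⁻¹ ≤ 1 := by
    rw [inv_le_one_iff₀]
    right
    exact one_le_pow₀ (by nlinarith)
  have h3 : Real.exp (-z / (1 + x * v)) ≤ 1 := by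
    rw [Real.exp_le_one_iff]
    have : 0 ≤ z / (1 + x * v) := div_nonneg hz h1.le
    simp [neg_div]
    linarith
  have : J n x z v ≤ Real.exp (-v) * 1 * 1 := by
    unfold J
    have e1 : Real.exp (-v) * ((1 + x * v) ^ n)⁻¹ ≤ Real.exp (-v) * 1 :=
      mul_le_mul_of_nonneg_left h2 (Real.exp_pos _).le
    have e2 : Real.exp (-v) * ((1 + x * v) ^ n)⁻¹ * Real.exp (-z / (1 + x * v)) ≤
        Real.exp (-v) * ((1 + x * v) ^ n)⁻¹ * 1 := by
      apply mul_le_mul_of_nonneg_left h3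
      positivity
    calc Real.exp (-v) * ((1 + x * v) ^ n)⁻¹ * Real.exp (-z / (1 + x * v))
        ≤ Real.exp (-v) * ((1 + x * v) ^ n)⁻¹ * 1 := e2
      _ ≤ Real.exp (-v) * 1 * 1 := by
          simpa using e1
  simpa using this

lemma contOn_J (n : ℕ) (x z : ℝ) (hx : 0 ≤ x) :
    ContinuousOn (fun v => J n x z v) (Set.Ici 0) := by
  unfold J
  have hne : ∀ v ∈ Set.Ici (0:ℝ), (1 + x * v) ≠ 0 := fun v hv => (one_add_pos hx hv).ne'
  have hc : ContinuousOn (fun v : ℝ => 1 + x * v) (Set.Ici 0) :=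
    (continuous_const.add (continuous_const.mul continuous_id)).continuousOn
  apply ContinuousOn.mul
  · apply ContinuousOn.mul
    · exact (Real.continuous_exp.comp continuous_neg).continuousOn
    · exact (hc.pow n).inv₀ (fun v hv => pow_ne_zero _ (hne v hv))
  · exact Real.continuous_exp.comp_continuousOn ((continuousOn_const.div hc hne))

lemma integrableOn_J {n : ℕ} {x z : ℝ} (hx : 0 ≤ x) (hz : 0 ≤ z) :
    IntegrableOn (J n x z) (Set.Ioi (0:ℝ)) := by
  have hmeas : AEStronglyMeasurable (J n x z) (volume.restrict (Set.Ioi (0:ℝ))) :=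
    ((contOn_J n x z hx).mono Ioi_subset_Ici_self).aestronglyMeasurable measurableSet_Ioi
  have hexp : IntegrableOn (fun v : ℝ => Real.exp (-v)) (Set.Ioi (0:ℝ)) := by
    simpa using exp_neg_integrableOn_Ioi (0:ℝ) one_pos
  refine Integrable.mono hexp hmeas ?_
  filter_upwards [ae_restrict_mem measurableSet_Ioi] with v hv
  rw [Real.norm_eq_abs, Real.norm_eq_abs, abs_of_nonneg (J_nonneg hx (le_of_lt hv)),
    abs_of_nonneg (Real.exp_pos _).le]
  exact J_le_exp hx hz (le_of_lt hv)

lemma Phi_le_one {n : ℕ} {x z : ℝ} (hx : 0 ≤ x) (hz : 0 ≤ z) : Phi n x z ≤ 1 := by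
  rw [Phi_eq]
  have hexp : IntegrableOn (fun v : ℝ => Real.exp (-v)) (Set.Ioi (0:ℝ)) := by
    simpa using exp_neg_integrableOn_Ioi (0:ℝ) one_pos
  calc (∫ v in Set.Ioi (0:ℝ), J n x z v) ≤ ∫ v in Set.Ioi (0:ℝ), Real.exp (-v) := by
        apply setIntegral_mono_on (integrableOn_J hx hz) hexp measurableSet_Ioi
        exact fun v hv => J_le_exp hx hz (le_of_lt hv)
    _ = 1 := integral_exp_neg_Ioi_zero

/-- Lower bound via the interval `(a, a+1]`. -/
lemma Phi_interval_lb {n : ℕ} {x z : ℝ} (hx : 0 ≤ x) (hz : 0 ≤ z) {a : ℝ} (ha : 0 ≤ a) :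
    Real.exp (-(a+1)) * ((1 + x * (a+1)) ^ n)⁻¹ * Real.exp (-z / (1 + x * a)) ≤ Phi n x z := by
  rw [Phi_eq]
  set c : ℝ := Real.exp (-(a+1)) * ((1 + x * (a+1)) ^ n)⁻¹ * Real.exp (-z / (1 + x * a)) with hc
  have h1 : (0:ℝ) < 1 + x * a := one_add_pos hx ha
  have h1' : (0:ℝ) < 1 + x * (a+1) := one_add_pos hx (by linarith)
  have key : ∀ v ∈ Set.Ioc a (a+1), c ≤ J n x z v := by
    intro v hv
    obtain ⟨hv1, hv2⟩ := hv
    have hv0 : 0 ≤ v := le_trans ha (le_of_lt hv1)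
    have hvp : (0:ℝ) < 1 + x * v := one_add_pos hx hv0
    unfold J
    rw [hc]
    have e1 : Real.exp (-(a+1)) ≤ Real.exp (-v) := by
      apply Real.exp_le_exp.2; linarith
    have e2 : ((1 + x * (a+1)) ^ n)⁻¹ ≤ ((1 + x * v) ^ n)⁻¹ := by
      apply inv_anti₀ (by positivity)
      apply pow_le_pow_left₀ hvp.le (by nlinarith) n
    have e3 : Real.exp (-z / (1 + x * a)) ≤ Real.exp (-z / (1 + x * v)) := by
      apply Real.exp_le_exp.2
      rw [neg_div, neg_div, neg_le_neg_iff]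
      apply div_le_div_of_nonneg_left hz h1
      nlinarith
    calc Real.exp (-(a+1)) * ((1 + x * (a+1)) ^ n)⁻¹ * Real.exp (-z / (1 + x * a))
        ≤ Real.exp (-v) * ((1 + x * (a+1)) ^ n)⁻¹ * Real.exp (-z / (1 + x * a)) := by
          apply mul_le_mul_of_nonneg_right (mul_le_mul_of_nonneg_right e1 (by positivity))
            (Real.exp_pos _).le
      _ ≤ Real.exp (-v) * ((1 + x * v) ^ n)⁻¹ * Real.exp (-z / (1 + x * a)) := by
          apply mul_le_mul_of_nonneg_right (mul_le_mul_of_nonneg_left e2 (Real.exp_pos _).le)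
            (Real.exp_pos _).le
      _ ≤ _ := mul_le_mul_of_nonneg_left e3 (by positivity)
  have hsub : Set.Ioc a (a+1) ⊆ Set.Ioi (0:ℝ) := fun v hv => lt_of_le_of_lt ha hv.1
  calc c = (volume (Set.Ioc a (a+1))).toReal • c := by
        rw [Real.volume_Ioc]
        norm_num
    _ = ∫ _ in Set.Ioc a (a+1), c := (setIntegral_const c).symm
    _ ≤ ∫ v in Set.Ioc a (a+1), J n x z v := by
        apply setIntegral_mono_on (integrableOn_const (by simp) (by simp))
          ((integrableOn_J hx hz).mono_set hsub) measurableSet_Ioc key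
    _ ≤ ∫ v in Set.Ioi (0:ℝ), J n x z v := by
        apply setIntegral_mono_set (integrableOn_J hx hz)
        · filter_upwards [ae_restrict_mem measurableSet_Ioi] with v hv
          exact J_nonneg hx (le_of_lt hv)
        · exact HasSubset.Subset.eventuallyLE hsub

lemma Phi_pos {n : ℕ} {x z : ℝ} (hx : 0 ≤ x) (hz : 0 ≤ z) : 0 < Phi n x z := by
  have := Phi_interval_lb (n := n) hx hz (le_refl (0:ℝ))
  have h1 : (0:ℝ) < 1 + x * (0+1) := one_add_pos hx (by norm_num)
  calc (0:ℝ) < Real.exp (-(0+1)) * ((1 + x * (0+1)) ^ n)⁻¹ * Real.exp (-z / (1 + x * 0)) := by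
        positivity
    _ ≤ Phi n x z := this

/-- Crude exponential lower bound. -/
lemma Phi_ge_exp {n : ℕ} {x z : ℝ} (hx : 0 ≤ x) (hz : 0 ≤ z) :
    Real.exp (-1) * ((1 + x) ^ n)⁻¹ * Real.exp (-z) ≤ Phi n x z := by
  have := Phi_interval_lb (n := n) hx hz (le_refl (0:ℝ))
  simpa using this

lemma Phi_lower_sqrt {n : ℕ} {q z : ℝ} (hq : 0 < q) (hz : 0 ≤ z) :
    Real.exp (-1) * ((1+q)^n)⁻¹ * Real.exp (-(((n:ℝ)+1+1/q) * Real.sqrt z)) ≤ Phi n q z := by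
  obtain ⟨s, hs⟩ : ∃ t : ℝ, t = Real.sqrt z := ⟨_, rfl⟩
  have hs0 : 0 ≤ s := hs ▸ Real.sqrt_nonneg z
  have hz' : z = s^2 := by rw [hs]; exact (Real.sq_sqrt hz).symm
  rw [← hs]
  have key := Phi_interval_lb (n := n) hq.le hz (a := s) hs0
  refine le_trans ?_ key
  have h1 : (0:ℝ) < 1 + q * s := one_add_pos hq.le hs0
  have h2 : (0:ℝ) < 1 + q * (s+1) := one_add_pos hq.le (by linarith)
  have hR : (1 + q*(s+1))^n ≤ (1+q)^n * Real.exp ((n:ℝ)*s) := by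
    have h3 : (1:ℝ) + s ≤ Real.exp s := by
      have := Real.add_one_le_exp s; linarith
    have h4 : 1 + q * (s+1) ≤ (1+q) * Real.exp s := by
      nlinarith [Real.exp_pos s]
    calc (1 + q * (s+1)) ^ n ≤ ((1+q) * Real.exp s) ^ n :=
          pow_le_pow_left₀ (by positivity) h4 n
      _ = (1+q)^n * Real.exp ((n:ℝ) * s) := by
          rw [mul_pow, ← Real.exp_nat_mul]
  have e1 : Real.exp (-((n:ℝ)*s)) * ((1+q)^n)⁻¹ ≤ ((1 + q * (s+1)) ^ n)⁻¹ := by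
    have h5 : ((1+q)^n * Real.exp ((n:ℝ)*s))⁻¹ ≤ ((1 + q * (s+1)) ^ n)⁻¹ :=
      inv_anti₀ (by positivity) hR
    calc Real.exp (-((n:ℝ)*s)) * ((1+q)^n)⁻¹ = ((1+q)^n * Real.exp ((n:ℝ)*s))⁻¹ := by
          rw [mul_inv, Real.exp_neg]; ring
      _ ≤ _ := h5
  have e2 : Real.exp (-(s/q)) ≤ Real.exp (-z / (1 + q * s)) := by
    apply Real.exp_le_exp.2
    rw [neg_div, neg_le_neg_iff, div_le_div_iff₀ h1 hq]
    nlinarith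
  have eq1 : Real.exp (-1) * ((1+q)^n)⁻¹ * Real.exp (-(((n:ℝ)+1+1/q) * s))
      = Real.exp (-(s+1)) * (Real.exp (-((n:ℝ)*s)) * ((1+q)^n)⁻¹) * Real.exp (-(s/q)) := by
    have a1 : Real.exp (-(((n:ℝ)+1+1/q) * s))
        = Real.exp (-((n:ℝ)*s)) * Real.exp (-s) * Real.exp (-(s/q)) := by
      rw [← Real.exp_add, ← Real.exp_add]
      congr 1
      field_simp
      ring
    have a2 : Real.exp (-(s+1)) = Real.exp (-1) * Real.exp (-s) := by
      rw [← Real.exp_add]; congr 1; ring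
    rw [a1, a2]; ring
  rw [eq1]
  apply mul_le_mul (mul_le_mul_of_nonneg_left e1 (Real.exp_pos _).le) e2
    (Real.exp_pos _).le (by positivity)

lemma Phi_upper_split {n : ℕ} {p z a : ℝ} (hp : 0 ≤ p) (hz : 0 ≤ z) (ha : 0 ≤ a) :
    Phi n p z ≤ Real.exp (-(z/(1+p*a))) + Real.exp (-a) := by
  rw [Phi_eq]
  have hpa : (0:ℝ) < 1 + p * a := one_add_pos hp ha
  have hsplit : Set.Ioi (0:ℝ) = Set.Ioc 0 a ∪ Set.Ioi a := (Set.Ioc_union_Ioi_eq_Ioi ha).symm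
  have hdisj : Disjoint (Set.Ioc (0:ℝ) a) (Set.Ioi a) := Set.Ioc_disjoint_Ioi le_rfl
  have hint := integrableOn_J (n := n) (x := p) (z := z) hp hz
  have hint1 : IntegrableOn (J n p z) (Set.Ioc 0 a) := hint.mono_set (by rw [hsplit]; exact subset_union_left)
  have hint2 : IntegrableOn (J n p z) (Set.Ioi a) := hint.mono_set (by rw [hsplit]; exact subset_union_right)
  rw [hsplit, setIntegral_union hdisj measurableSet_Ioi hint1 hint2]
  have hexp : IntegrableOn (fun v : ℝ => Real.exp (-v)) (Set.Ioi (0:ℝ)) := by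
    simpa using exp_neg_integrableOn_Ioi (0:ℝ) one_pos
  have b1 : (∫ v in Set.Ioc (0:ℝ) a, J n p z v) ≤ Real.exp (-(z/(1+p*a))) := by
    have step : ∀ v ∈ Set.Ioc (0:ℝ) a, J n p z v ≤ Real.exp (-(z/(1+p*a))) * Real.exp (-v) := by
      intro v hv
      have hv0 : 0 ≤ v := hv.1.le
      have hvp : (0:ℝ) < 1 + p * v := one_add_pos hp hv0
      have hle : Real.exp (-z / (1 + p * v)) ≤ Real.exp (-(z/(1+p*a))) := by
        apply Real.exp_le_exp.2
        rw [neg_div, neg_le_neg_iff]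
        apply div_le_div_of_nonneg_left hz hvp
        nlinarith [hv.2]
      have h2 : ((1 + p * v) ^ n)⁻¹ ≤ 1 := by
        rw [inv_le_one_iff₀]; right; exact one_le_pow₀ (by nlinarith)
      calc J n p z v ≤ Real.exp (-v) * 1 * Real.exp (-(z/(1+p*a))) := by
            unfold J
            apply mul_le_mul (mul_le_mul_of_nonneg_left h2 (Real.exp_pos _).le) hle
              (Real.exp_pos _).le (by positivity)
        _ = Real.exp (-(z/(1+p*a))) * Real.exp (-v) := by ring
    calc (∫ v in Set.Ioc (0:ℝ) a, J n p z v)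
        ≤ ∫ v in Set.Ioc (0:ℝ) a, Real.exp (-(z/(1+p*a))) * Real.exp (-v) := by
          apply setIntegral_mono_on hint1 ((hexp.mono_set (by rw [hsplit]; exact subset_union_left)).const_mul _)
            measurableSet_Ioc step
      _ = Real.exp (-(z/(1+p*a))) * ∫ v in Set.Ioc (0:ℝ) a, Real.exp (-v) := by
          rw [integral_const_mul]
      _ ≤ Real.exp (-(z/(1+p*a))) * 1 := by
          apply mul_le_mul_of_nonneg_left _ (Real.exp_pos _).le
          have : (∫ v in Set.Ioc (0:ℝ) a, Real.exp (-v)) ≤ ∫ v in Set.Ioi (0:ℝ), Real.exp (-v) := by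
            apply setIntegral_mono_set hexp
            · filter_upwards with v using (Real.exp_pos _).le
            · exact HasSubset.Subset.eventuallyLE (by rw [hsplit]; exact subset_union_left)
          rw [integral_exp_neg_Ioi_zero] at this
          exact this
      _ = Real.exp (-(z/(1+p*a))) := mul_one _
  have b2 : (∫ v in Set.Ioi a, J n p z v) ≤ Real.exp (-a) := by
    have hexpa : IntegrableOn (fun v : ℝ => Real.exp (-v)) (Set.Ioi a) := by
      simpa using exp_neg_integrableOn_Ioi a one_pos
    calc (∫ v in Set.Ioi a, J n p z v) ≤ ∫ v in Set.Ioi a, Real.exp (-v) := by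
          apply setIntegral_mono_on hint2 hexpa measurableSet_Ioi
          intro v hv
          exact J_le_exp hp hz (le_trans ha hv.le)
      _ = Real.exp (-a) := integral_exp_neg_Ioi a
  linarith

set_option maxHeartbeats 1000000 in
/-- Uniform comparison: there are `δ, M` such that `Phi n p z ≤ M * Phi n q z`
for all `0 < p ≤ δ` and `z ≥ 0`. -/
lemma Phi_ratio (n : ℕ) {q : ℝ} (hq : 0 < q) :
    ∃ δ M : ℝ, 0 < δ ∧ δ ≤ q/2 ∧ 1 ≤ M ∧
      ∀ p z : ℝ, 0 < p → p ≤ δ → 0 ≤ z → Phi n p z ≤ M * Phi n q z := by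
  obtain ⟨β, hβ⟩ : ∃ b : ℝ, b = (n:ℝ)+1+1/q := ⟨_, rfl⟩
  have hβ0 : 0 < β := by rw [hβ]; positivity
  obtain ⟨c₀, hc₀⟩ : ∃ c : ℝ, c = Real.exp (-1) * ((1+q)^n)⁻¹ := ⟨_, rfl⟩
  have hc₀0 : 0 < c₀ := by rw [hc₀]; positivity
  obtain ⟨σ, hσ⟩ : ∃ t : ℝ, t = min (Real.sqrt (q/2)) (1/(2*β)) := ⟨_, rfl⟩
  have hσ0 : 0 < σ := by
    rw [hσ]
    exact lt_min (Real.sqrt_pos.2 (by linarith)) (by positivity)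
  refine ⟨σ^2, 2 * Real.exp (β^2/2) / c₀, by positivity, ?_, ?_, ?_⟩
  · calc σ^2 ≤ (Real.sqrt (q/2))^2 := by
          apply pow_le_pow_left₀ hσ0.le
          rw [hσ]
          exact min_le_left _ _
      _ = q/2 := Real.sq_sqrt (by linarith)
  · have h1 : c₀ ≤ 1 := by
      rw [hc₀]
      have e1 : Real.exp (-1:ℝ) ≤ 1 := Real.exp_le_one_iff.2 (by norm_num)
      have e2 : ((1+q)^n)⁻¹ ≤ 1 := by
        rw [inv_le_one_iff₀]; right; exact one_le_pow₀ (by linarith)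
      nlinarith [Real.exp_pos (-1:ℝ), inv_nonneg.2 (pow_nonneg (by linarith : (0:ℝ) ≤ 1+q) n)]
    have h2 : (1:ℝ) ≤ Real.exp (β^2/2) := Real.one_le_exp (by positivity)
    rw [le_div_iff₀ hc₀0]
    nlinarith
  · intro p z hp hpδ hz
    obtain ⟨s, hs⟩ : ∃ t : ℝ, t = Real.sqrt z := ⟨_, rfl⟩
    have hs0 : 0 ≤ s := hs ▸ Real.sqrt_nonneg z
    have hz' : z = s^2 := by rw [hs]; exact (Real.sq_sqrt hz).symm
    have hup := Phi_upper_split (n := n) (a := s/σ) hp.le hz (by positivity)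
    have hσβ : 2*σ*β ≤ 1 := by
      have h : σ ≤ 1/(2*β) := by
        rw [hσ]; exact min_le_right _ _
      rw [le_div_iff₀ (by positivity)] at h
      linarith
    have key1 : Real.exp (-(z/(1+p*(s/σ)))) ≤ Real.exp (β^2/2 - β*s) := by
      apply Real.exp_le_exp.2
      have hpa : p * (s/σ) ≤ σ * s := by
        rw [mul_div_assoc', div_le_iff₀ hσ0]
        nlinarith
      have hd : (0:ℝ) < 1 + p*(s/σ) := one_add_pos hp.le (by positivity)
      have hstep : z/(1+σ*s) ≤ z/(1+p*(s/σ)) := by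
        apply div_le_div_of_nonneg_left hz hd
        linarith
      have hd1 : (0:ℝ) < 1 + σ*s := one_add_pos hσ0.le hs0
      have main : β*s - β^2/2 ≤ z/(1+σ*s) := by
        rcases le_total (σ*s) 1 with hcase | hcase
        · have h1 : s^2/2 ≤ z/(1+σ*s) := by
            rw [hz', div_le_div_iff₀ (by norm_num) hd1]
            nlinarith
          have h2 : β*s - β^2/2 ≤ s^2/2 := by nlinarith [sq_nonneg (s - β)]
          linarith
        · have h2β : 2*β ≤ s := by nlinarith
          have h1 : β*s ≤ z/(1+σ*s) := by
            rw [hz', le_div_iff₀ hd1]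
            nlinarith [sq_nonneg s]
          nlinarith [sq_nonneg β]
      linarith
    have key2 : Real.exp (-(s/σ)) ≤ Real.exp (β^2/2 - β*s) := by
      apply Real.exp_le_exp.2
      have h3 : 2*β*s ≤ s/σ := by
        rw [le_div_iff₀ hσ0]
        nlinarith
      nlinarith [hβ0.le, hs0, sq_nonneg β]
    have hlow := Phi_lower_sqrt (n := n) hq hz
    rw [← hs] at hlow
    have hMc : 2 * Real.exp (β^2/2) / c₀ * c₀ = 2 * Real.exp (β^2/2) :=
      div_mul_cancel₀ _ hc₀0.ne'
    calc Phi n p z ≤ Real.exp (-(z/(1+p*(s/σ)))) + Real.exp (-(s/σ)) := hup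
      _ ≤ Real.exp (β^2/2 - β*s) + Real.exp (β^2/2 - β*s) := add_le_add key1 key2
      _ = 2 * Real.exp (β^2/2) * Real.exp (-(β*s)) := by
          rw [show β^2/2 - β*s = β^2/2 + -(β*s) by ring, Real.exp_add]; ring
      _ = 2 * Real.exp (β^2/2) / c₀ * (c₀ * Real.exp (-(β*s))) := by
          rw [← mul_assoc, hMc]
      _ ≤ 2 * Real.exp (β^2/2) / c₀ * Phi n q z := by
          apply mul_le_mul_of_nonneg_left _ (by positivity)
          calc c₀ * Real.exp (-(β*s)) = Real.exp (-1) * ((1+q)^n)⁻¹ * Real.exp (-(β * s)) := by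
                rw [hc₀]
            _ ≤ Phi n q z := by
                rw [hβ]
                exact hlow

/-- Gamma-type integral. -/
lemma integral_pow_exp (m : ℕ) {c : ℝ} (hc : 0 < c) :
    ∫ z in Set.Ioi (0:ℝ), z ^ m * Real.exp (-(c * z)) = (Nat.factorial m : ℝ) / c ^ (m+1) := by
  have h := integral_rpow_mul_exp_neg_mul_Ioi (a := (m:ℝ)+1) (r := c) (by positivity) hc
  have heq : ∀ z ∈ Set.Ioi (0:ℝ), z ^ (((m:ℝ)+1) - 1) * Real.exp (-(c * z))
      = z ^ m * Real.exp (-(c * z)) := by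
    intro z hz
    congr 1
    rw [show ((m:ℝ)+1) - 1 = (m:ℝ) by ring, Real.rpow_natCast]
  rw [setIntegral_congr_fun measurableSet_Ioi heq] at h
  rw [h]
  have hG : Real.Gamma ((m:ℝ)+1) = (Nat.factorial m : ℝ) := by
    rw [show ((m:ℝ)+1) = ((m+1 : ℕ) : ℝ) by push_cast; ring]
    exact_mod_cast Real.Gamma_nat_eq_factorial m
  rw [hG, show ((m:ℝ)+1) = ((m+1:ℕ):ℝ) by push_cast; ring, Real.rpow_natCast, div_pow, one_pow]
  ring

lemma integrableOn_pow_exp (m : ℕ) {c : ℝ} (hc : 0 < c) :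
    IntegrableOn (fun z : ℝ => z ^ m * Real.exp (-(c * z))) (Set.Ioi (0:ℝ)) := by
  have hm : (-1:ℝ) < (m:ℝ) := by
    have : (0:ℝ) ≤ (m:ℝ) := Nat.cast_nonneg m
    linarith
  have h := integrableOn_rpow_mul_exp_neg_mul_rpow (p := 1) (s := (m:ℝ)) (b := c)
    hm zero_lt_one hc
  apply h.congr_fun _ measurableSet_Ioi
  intro z hz
  simp only [Real.rpow_natCast, Real.rpow_one, neg_mul]

/-- Joint continuity of the weighted integrand. -/
lemma contOn_wJ (n m : ℕ) (x : ℝ) (hx : 0 ≤ x) :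
    ContinuousOn (fun zv : ℝ × ℝ => zv.1 ^ m / (Nat.factorial m : ℝ) * J n x zv.1 zv.2)
      (Set.Ioi (0:ℝ) ×ˢ Set.Ioi (0:ℝ)) := by
  unfold J
  have hne : ∀ zv : ℝ × ℝ, zv ∈ Set.Ioi (0:ℝ) ×ˢ Set.Ioi (0:ℝ) → (1 + x * zv.2) ≠ 0 :=
    fun zv hzv => (one_add_pos hx (le_of_lt hzv.2)).ne'
  have hc : ContinuousOn (fun zv : ℝ × ℝ => 1 + x * zv.2) (Set.Ioi (0:ℝ) ×ˢ Set.Ioi (0:ℝ)) :=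
    (continuous_const.add (continuous_const.mul continuous_snd)).continuousOn
  apply ContinuousOn.mul
  · exact ((continuous_fst.pow m).div_const _).continuousOn
  apply ContinuousOn.mul
  · apply ContinuousOn.mul
    · exact (Real.continuous_exp.comp continuous_snd.neg).continuousOn
    · exact (hc.pow n).inv₀ (fun zv hzv => pow_ne_zero _ (hne zv hzv))
  · exact Real.continuous_exp.comp_continuousOn
      ((continuous_fst.neg.continuousOn.div hc hne))

/-- The inner z-integral equals `exp (-v)`. -/
lemma inner_z_integral (n m : ℕ) (hnm : n = m + 1) {x v : ℝ} (hx : 0 ≤ x) (hv : 0 < v) :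
    ∫ z in Set.Ioi (0:ℝ), z ^ m / (Nat.factorial m : ℝ) * J n x z v = Real.exp (-v) := by
  have ht : (0:ℝ) < 1 + x * v := one_add_pos hx hv.le
  have hco : (0:ℝ) < (1 + x * v)⁻¹ := by positivity
  have heq : ∀ z : ℝ, z ^ m / (Nat.factorial m : ℝ) * J n x z v
      = (Real.exp (-v) * ((1 + x * v) ^ n)⁻¹ / (Nat.factorial m : ℝ)) *
        (z ^ m * Real.exp (-((1 + x * v)⁻¹ * z))) := by
    intro z
    unfold J
    rw [show -((1 + x * v)⁻¹ * z) = -z / (1 + x*v) by field_simp]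
    ring
  simp_rw [heq]
  rw [integral_const_mul, integral_pow_exp m hco]
  subst hnm
  have hfac : (Nat.factorial m : ℝ) ≠ 0 := by positivity
  have hne : (1 + x * v) ≠ 0 := ht.ne'
  rw [inv_pow]
  field_simp

/-- Product integrability of the weighted integrand. -/
lemma wJ_prod_integrable (n m : ℕ) (hnm : n = m + 1) {x : ℝ} (hx : 0 ≤ x) :
    Integrable (fun zv : ℝ × ℝ => zv.1 ^ m / (Nat.factorial m : ℝ) * J n x zv.1 zv.2)
      ((volume.restrict (Set.Ioi (0:ℝ))).prod (volume.restrict (Set.Ioi (0:ℝ)))) := by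
  have hmeas : AEStronglyMeasurable (fun zv : ℝ × ℝ => zv.1 ^ m / (Nat.factorial m : ℝ) * J n x zv.1 zv.2)
      ((volume.restrict (Set.Ioi (0:ℝ))).prod (volume.restrict (Set.Ioi (0:ℝ)))) := by
    rw [Measure.prod_restrict]
    exact (contOn_wJ n m x hx).aestronglyMeasurable (measurableSet_Ioi.prod measurableSet_Ioi)
  rw [integrable_prod_iff' hmeas]
  constructor
  · filter_upwards [ae_restrict_mem measurableSet_Ioi] with v hv
    have ht : (0:ℝ) < 1 + x * v := one_add_pos hx (le_of_lt hv)
    have hco : (0:ℝ) < (1 + x * v)⁻¹ := by positivity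
    have heq : ∀ z : ℝ, z ^ m / (Nat.factorial m : ℝ) * J n x z v
        = (Real.exp (-v) * ((1 + x * v) ^ n)⁻¹ / (Nat.factorial m : ℝ)) *
          (z ^ m * Real.exp (-((1 + x * v)⁻¹ * z))) := by
      intro z
      unfold J
      rw [show -((1 + x * v)⁻¹ * z) = -z / (1 + x*v) by field_simp]
      ring
    simp_rw [heq]
    exact (integrableOn_pow_exp m hco).const_mul _
  · have heq : ∀ᵐ v ∂(volume.restrict (Set.Ioi (0:ℝ))),
        (∫ z in Set.Ioi (0:ℝ), ‖z ^ m / (Nat.factorial m : ℝ) * J n x z v‖) = Real.exp (-v) := by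
      filter_upwards [ae_restrict_mem measurableSet_Ioi] with v hv
      have habs : ∀ z ∈ Set.Ioi (0:ℝ), ‖z ^ m / (Nat.factorial m : ℝ) * J n x z v‖
          = z ^ m / (Nat.factorial m : ℝ) * J n x z v := by
        intro z hz
        have hz0 : (0:ℝ) < z := hz
        rw [Real.norm_eq_abs, abs_of_nonneg]
        apply mul_nonneg (by positivity)
        exact J_nonneg hx (le_of_lt hv)
      rw [setIntegral_congr_fun measurableSet_Ioi habs]
      exact inner_z_integral n m hnm hx hv
    have hexp : IntegrableOn (fun v : ℝ => Real.exp (-v)) (Set.Ioi (0:ℝ)) := by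
      simpa using exp_neg_integrableOn_Ioi (0:ℝ) one_pos
    refine hexp.congr ?_
    filter_upwards [heq] with v hv
    exact hv.symm

lemma Phi_aesm (n m : ℕ) (hnm : n = m + 1) {x : ℝ} (hx : 0 ≤ x) :
    AEStronglyMeasurable (fun z => Phi n x z) (volume.restrict (Set.Ioi (0:ℝ))) := by
  have hmeas : AEStronglyMeasurable (fun zv : ℝ × ℝ => zv.1 ^ m / (Nat.factorial m : ℝ) * J n x zv.1 zv.2)
      ((volume.restrict (Set.Ioi (0:ℝ))).prod (volume.restrict (Set.Ioi (0:ℝ)))) := by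
    rw [Measure.prod_restrict]
    exact (contOn_wJ n m x hx).aestronglyMeasurable (measurableSet_Ioi.prod measurableSet_Ioi)
  have h1 := hmeas.integral_prod_right'
  have h2 : AEStronglyMeasurable (fun z : ℝ => z ^ m / (Nat.factorial m : ℝ) * Phi n x z)
      (volume.restrict (Set.Ioi (0:ℝ))) := by
    apply h1.congr
    filter_upwards with z
    rw [integral_const_mul, Phi_eq]
  have h3 : AEStronglyMeasurable (fun z : ℝ => (z ^ m / (Nat.factorial m : ℝ))⁻¹)
      (volume.restrict (Set.Ioi (0:ℝ))) :=
    (((continuous_pow m).div_const _).measurable.inv).aestronglyMeasurable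
  apply (h3.mul h2).congr
  filter_upwards [ae_restrict_mem measurableSet_Ioi] with z hz
  have hz0 : (0:ℝ) < z := hz
  have hne : z ^ m / (Nat.factorial m : ℝ) ≠ 0 := by positivity
  show (z ^ m / (Nat.factorial m : ℝ))⁻¹ * (z ^ m / (Nat.factorial m : ℝ) * Phi n x z)
      = Phi n x z
  rw [← mul_assoc, inv_mul_cancel₀ hne, one_mul]

lemma wPhi_integrable (n m : ℕ) (hnm : n = m + 1) {x : ℝ} (hx : 0 ≤ x) :
    IntegrableOn (fun z => z ^ m / (Nat.factorial m : ℝ) * Phi n x z) (Set.Ioi (0:ℝ)) := by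
  have h := (wJ_prod_integrable n m hnm hx).integral_prod_left
  apply h.congr
  filter_upwards with z
  rw [integral_const_mul, Phi_eq]

lemma wPhi_integral (n m : ℕ) (hnm : n = m + 1) {x : ℝ} (hx : 0 ≤ x) :
    ∫ z in Set.Ioi (0:ℝ), z ^ m / (Nat.factorial m : ℝ) * Phi n x z = 1 := by
  have hswap := MeasureTheory.integral_integral_swap
    (μ := volume.restrict (Set.Ioi (0:ℝ))) (ν := volume.restrict (Set.Ioi (0:ℝ)))
    (f := fun z v => z ^ m / (Nat.factorial m : ℝ) * J n x z v)
    (wJ_prod_integrable n m hnm hx)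
  have lhs_eq : (∫ z in Set.Ioi (0:ℝ), ∫ v in Set.Ioi (0:ℝ), z ^ m / (Nat.factorial m : ℝ) * J n x z v)
      = ∫ z in Set.Ioi (0:ℝ), z ^ m / (Nat.factorial m : ℝ) * Phi n x z := by
    apply setIntegral_congr_fun measurableSet_Ioi
    intro z hz
    show (∫ v in Set.Ioi (0:ℝ), z ^ m / (Nat.factorial m : ℝ) * J n x z v)
        = z ^ m / (Nat.factorial m : ℝ) * Phi n x z
    rw [integral_const_mul, Phi_eq]
  have rhs_eq : (∫ v in Set.Ioi (0:ℝ), ∫ z in Set.Ioi (0:ℝ), z ^ m / (Nat.factorial m : ℝ) * J n x z v)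
      = ∫ v in Set.Ioi (0:ℝ), Real.exp (-v) := by
    apply setIntegral_congr_fun measurableSet_Ioi
    intro v hv
    exact inner_z_integral n m hnm hx hv
  beta_reduce at hswap
  rw [lhs_eq] at hswap
  rw [hswap, rhs_eq, integral_exp_neg_Ioi_zero]

/-- Pointwise convergence of `Phi` as `p → 0⁺`. -/
lemma Phi_tendsto (n : ℕ) {q z : ℝ} (hq : 0 < q) (hz : 0 ≤ z) :
    Tendsto (fun p => Phi n p z) (nhdsWithin 0 (Set.Ioo 0 q)) (nhds (Real.exp (-z))) := by
  have hl : nhdsWithin (0:ℝ) (Set.Ioo 0 q) ≤ nhds 0 := nhdsWithin_le_nhds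
  have hmem : ∀ᶠ p in nhdsWithin (0:ℝ) (Set.Ioo 0 q), p ∈ Set.Ioo 0 q :=
    eventually_mem_nhdsWithin
  have key : Tendsto (fun p => ∫ v in Set.Ioi (0:ℝ), J n p z v)
      (nhdsWithin 0 (Set.Ioo 0 q))
      (nhds (∫ v in Set.Ioi (0:ℝ), Real.exp (-v) * Real.exp (-z))) := by
    apply tendsto_integral_filter_of_dominated_convergence (fun v => Real.exp (-v))
    · filter_upwards [hmem] with p hp
      exact ((contOn_J n p z hp.1.le).mono Ioi_subset_Ici_self).aestronglyMeasurable
        measurableSet_Ioi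
    · filter_upwards [hmem] with p hp
      filter_upwards [ae_restrict_mem measurableSet_Ioi] with v hv
      rw [Real.norm_eq_abs, abs_of_nonneg (J_nonneg hp.1.le hv.le)]
      exact J_le_exp hp.1.le hz hv.le
    · exact (by simpa using exp_neg_integrableOn_Ioi (0:ℝ) one_pos :
        IntegrableOn (fun v : ℝ => Real.exp (-v)) (Set.Ioi (0:ℝ)))
    · filter_upwards [ae_restrict_mem measurableSet_Ioi] with v hv
      have h1 : ContinuousAt (fun p : ℝ => 1 + p * v) 0 :=
        (continuous_const.add (continuous_id.mul continuous_const)).continuousAt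
      have hne : (1 + (0:ℝ) * v) ≠ 0 := by norm_num
      have hcont : ContinuousAt (fun p : ℝ => J n p z v) 0 := by
        unfold J
        have h2 : ContinuousAt (fun p : ℝ => -z / (1 + p * v)) 0 :=
          ContinuousAt.div continuousAt_const h1 hne
        have h3 : ContinuousAt (fun p : ℝ => ((1 + p * v) ^ n)⁻¹) 0 :=
          (h1.pow n).inv₀ (pow_ne_zero n hne)
        exact (continuousAt_const.mul h3).mul (Real.continuous_exp.continuousAt.comp h2)
      have hT := hcont.tendsto.mono_left hl
      have hval : J n 0 z v = Real.exp (-v) * Real.exp (-z) := by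
        unfold J
        norm_num
      rwa [hval] at hT
  have hval2 : (∫ v in Set.Ioi (0:ℝ), Real.exp (-v) * Real.exp (-z)) = Real.exp (-z) := by
    rw [integral_mul_const, integral_exp_neg_Ioi_zero, one_mul]
  rw [hval2] at key
  apply key.congr
  intro p
  rw [Phi_eq]

/-- Quadratic/cubic control of `log (1+t)`. -/
lemma log_taylor_bound {t : ℝ} (ht : |t| ≤ 1/2) :
    |Real.log (1+t) - t + t^2/2| ≤ 2*|t|^3 := by
  have hx : |(-t)| < 1 := by
    rw [abs_neg]
    calc |t| ≤ 1/2 := ht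
      _ < 1 := by norm_num
  have h := Real.abs_log_sub_add_sum_range_le hx 2
  have hsum : (∑ i ∈ Finset.range 2, (-t) ^ (i+1) / ((i:ℝ)+1)) = -t + t^2/2 := by
    rw [Finset.sum_range_succ, Finset.sum_range_succ, Finset.sum_range_zero]
    norm_num
  rw [hsum] at h
  have hlog : Real.log (1 - -t) = Real.log (1 + t) := by norm_num
  rw [hlog] at h
  have habs : |(-t)| ^ (2+1) = |t|^3 := by rw [abs_neg]
  rw [habs, abs_neg] at h
  have h3 : |t|^3/(1 - |t|) ≤ 2*|t|^3 := by
    rw [div_le_iff₀ (by linarith)]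
    nlinarith [pow_nonneg (abs_nonneg t) 3]
  calc |Real.log (1+t) - t + t^2/2| = |(-t + t^2/2) + Real.log (1+t)| := by
        congr 1; ring
    _ ≤ |t|^3/(1 - |t|) := h
    _ ≤ 2*|t|^3 := h3

lemma log_sub_bound {t : ℝ} (ht : |t| ≤ 1/2) :
    |Real.log (1+t) - t| ≤ (3/2)*t^2 := by
  have h := log_taylor_bound ht
  have h2 : |t|^3 ≤ (1/2) * t^2 := by
    have he : |t|^3 = |t| * |t|^2 := by ring
    rw [he, sq_abs]
    nlinarith [sq_nonneg t, abs_nonneg t]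
  have h4 : |Real.log (1+t) - t| ≤ |Real.log (1+t) - t + t^2/2| + |t^2/2| := by
    calc |Real.log (1+t) - t| = |(Real.log (1+t) - t + t^2/2) - t^2/2| := by congr 1; ring
      _ ≤ _ := abs_sub _ _
  have h6 : |t^2/2| = t^2/2 := abs_of_nonneg (by positivity)
  rw [h6] at h4
  calc |Real.log (1+t) - t| ≤ 2*|t|^3 + t^2/2 := by linarith
    _ ≤ 2*((1/2)*t^2) + t^2/2 := by linarith
    _ = (3/2)*t^2 := by ring

lemma log_abs_bound {t : ℝ} (ht : |t| ≤ 1/2) :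
    |Real.log (1+t)| ≤ 2*|t| := by
  have h := log_sub_bound ht
  have h2 : (3/2)*t^2 ≤ (2:ℝ)*|t| - |t| := by
    have he : t^2 = |t| * |t| := by rw [← sq_abs]; ring
    rw [he]
    nlinarith [abs_nonneg t, ht]
  calc |Real.log (1+t)| = |(Real.log (1+t) - t) + t| := by congr 1; ring
    _ ≤ |Real.log (1+t) - t| + |t| := abs_add_le _ _
    _ ≤ (3/2)*t^2 + |t| := by linarith
    _ ≤ 2*|t| := by linarith

end S11

open S11 in
set_option maxHeartbeats 2000000 in
theorem stmt_11 (n : ℕ) (hn : 1 ≤ n) (q : ℝ) (hq : 0 < q)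
    (D : ℝ → ℝ)
    (hD : ∀ p : ℝ, 0 < p → p < q →
      D p = -∫ z in Set.Ioi (0 : ℝ),
        z ^ (n - 1) / (Nat.factorial (n - 1) : ℝ) * Phi n q z *
          Real.log (1 + p / (q - p) * (1 - Phi n p z / Phi n q z)))
    (ζ : ℝ)
    (hζ : ζ = -1 + ∫ z in Set.Ioi (0 : ℝ),
      z ^ (n - 1) / (Nat.factorial (n - 1) : ℝ) * Real.exp (-(2 * z)) / Phi n q z) :
    Tendsto (fun p : ℝ => D p / p ^ 2) (nhdsWithin 0 (Set.Ioo 0 q))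
      (nhds (ζ / (2 * q ^ 2))) := by
  obtain ⟨m, rfl⟩ : ∃ m, n = m + 1 := ⟨n - 1, (Nat.succ_pred_eq_of_pos hn).symm⟩
  simp only [Nat.add_sub_cancel] at hD hζ
  set l := nhdsWithin (0:ℝ) (Set.Ioo 0 q) with hl_def
  have hl : l ≤ nhds 0 := nhdsWithin_le_nhds
  set W : ℝ → ℝ := fun z => z ^ m / (Nat.factorial m : ℝ) with hW
  have hWcont : Continuous W := (continuous_pow m).div_const _
  have hWnn : ∀ z : ℝ, 0 < z → 0 ≤ W z := by
    intro z hz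
    rw [hW]
    positivity
  set T : ℝ → ℝ → ℝ := fun p z => p / (q - p) * (1 - Phi (m+1) p z / Phi (m+1) q z) with hT
  obtain ⟨δ, M, hδ0, hδq2, hM1, hratio⟩ := Phi_ratio (m+1) hq
  set K : ℝ := 2*(1+M)/q with hK
  have hK0 : 0 < K := by rw [hK]; positivity
  set δ' : ℝ := min δ (1/(2*K)) with hδ'
  have hδ'0 : 0 < δ' := lt_min hδ0 (by positivity)
  have hδ'δ : δ' ≤ δ := min_le_left _ _
  have hδ'K : δ' ≤ 1/(2*K) := min_le_right _ _
  -- eventually p is small and in (0, q)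
  have hev : ∀ᶠ p in l, p ∈ Set.Ioo 0 q ∧ p ≤ δ' := by
    have h1 : ∀ᶠ p in l, p ∈ Set.Ioo 0 q := eventually_mem_nhdsWithin
    have h2 : ∀ᶠ p in l, p ≤ δ' := (eventually_le_nhds hδ'0).filter_mono hl
    exact h1.and h2
  -- |T p z| ≤ p K
  have keyT : ∀ p : ℝ, p ∈ Set.Ioo 0 q → p ≤ δ' → ∀ z : ℝ, 0 < z → |T p z| ≤ p * K := by
    intro p hp hpδ z hz
    have hp0 : 0 < p := hp.1
    have hΦq0 : 0 < Phi (m+1) q z := Phi_pos hq.le hz.le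
    have hΦp0 : 0 < Phi (m+1) p z := Phi_pos hp0.le hz.le
    have hr := hratio p z hp0 (le_trans hpδ hδ'δ) hz.le
    have hdiv : Phi (m+1) p z / Phi (m+1) q z ≤ M := by
      rw [div_le_iff₀ hΦq0]
      nlinarith
    have hdiv0 : 0 ≤ Phi (m+1) p z / Phi (m+1) q z := le_of_lt (div_pos hΦp0 hΦq0)
    have habs1 : |1 - Phi (m+1) p z / Phi (m+1) q z| ≤ 1 + M :=
      abs_le.2 ⟨by linarith, by linarith⟩
    have hqp : q/2 ≤ q - p := by
      have : p ≤ q/2 := le_trans hpδ (le_trans hδ'δ hδq2)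
      linarith
    have hfrac : p/(q-p) ≤ p*(2/q) := by
      rw [div_le_iff₀ (by linarith)]
      have h2q : 0 < 2/q := by positivity
      have hqq : (2/q)*(q/2) = 1 := by field_simp
      nlinarith [mul_le_mul_of_nonneg_left hqp (mul_pos hp0 h2q).le]
    have hfrac0 : 0 ≤ p/(q-p) := div_nonneg hp0.le (by linarith)
    calc |T p z| = (p/(q-p)) * |1 - Phi (m+1) p z / Phi (m+1) q z| := by
          rw [hT, abs_mul, abs_of_nonneg hfrac0]
      _ ≤ (p*(2/q)) * (1+M) := by
          apply mul_le_mul hfrac habs1 (abs_nonneg _) (by positivity)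
      _ = p * K := by rw [hK]; ring
  have keyhalf : ∀ p : ℝ, 0 < p → p ≤ δ' → p * K ≤ 1/2 := by
    intro p hp0 hpδ
    have h1 : p ≤ 1/(2*K) := le_trans hpδ hδ'K
    rw [le_div_iff₀ (by positivity)] at h1
    linarith
  -- basic integrability and measurability facts
  have hmeas_q : AEStronglyMeasurable (fun z => Phi (m+1) q z) (volume.restrict (Set.Ioi (0:ℝ))) :=
    Phi_aesm (m+1) m rfl hq.le
  have hWq_int : IntegrableOn (fun z => W z * Phi (m+1) q z) (Set.Ioi (0:ℝ)) :=
    wPhi_integrable (m+1) m rfl hq.le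
  have hWq_val : ∫ z in Set.Ioi (0:ℝ), W z * Phi (m+1) q z = 1 := wPhi_integral (m+1) m rfl hq.le
  have aesm_Wq : AEStronglyMeasurable (fun z => W z * Phi (m+1) q z)
      (volume.restrict (Set.Ioi (0:ℝ))) := hWcont.aestronglyMeasurable.mul hmeas_q
  have hT_meas : ∀ p : ℝ, 0 ≤ p → AEStronglyMeasurable (fun z => T p z)
      (volume.restrict (Set.Ioi (0:ℝ))) := by
    intro p hp
    have h1 := (Phi_aesm (m+1) m rfl hp).aemeasurable
    have h2 := hmeas_q.aemeasurable
    exact (((aemeasurable_const.sub (h1.div h2)).const_mul _)).aestronglyMeasurable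
  have hlog_meas : ∀ p : ℝ, 0 ≤ p → AEStronglyMeasurable (fun z => Real.log (1 + T p z))
      (volume.restrict (Set.Ioi (0:ℝ))) := by
    intro p hp
    exact (Real.measurable_log.comp_aemeasurable
      (aemeasurable_const.add (hT_meas p hp).aemeasurable)).aestronglyMeasurable
  -- the integrand after centering
  set G : ℝ → ℝ → ℝ :=
    fun p z => -(W z * Phi (m+1) q z * (Real.log (1 + T p z) - T p z)) / p^2 with hG
  -- Step A : eventual identity for D p / p²
  have hDeq : ∀ᶠ p in l, D p / p^2 = ∫ z in Set.Ioi (0:ℝ), G p z := by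
    filter_upwards [hev] with p ⟨hp, hpδ⟩
    have hp0 : 0 < p := hp.1
    have hWp_int : IntegrableOn (fun z => W z * Phi (m+1) p z) (Set.Ioi (0:ℝ)) :=
      wPhi_integrable (m+1) m rfl hp0.le
    have hWp_val : ∫ z in Set.Ioi (0:ℝ), W z * Phi (m+1) p z = 1 :=
      wPhi_integral (m+1) m rfl hp0.le
    have htb : ∀ z : ℝ, 0 < z → |T p z| ≤ p*K := keyT p hp hpδ
    have hhalf : p*K ≤ 1/2 := keyhalf p hp0 hpδ
    have hWqT_eq : ∀ z ∈ Set.Ioi (0:ℝ), W z * Phi (m+1) q z * T p z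
        = (p/(q-p)) * (W z * Phi (m+1) q z - W z * Phi (m+1) p z) := by
      intro z hz
      have hΦq0 : Phi (m+1) q z ≠ 0 := (Phi_pos hq.le (le_of_lt hz)).ne'
      have key : ∀ Wz a b c : ℝ, b ≠ 0 → Wz * b * (c * (1 - a/b)) = c * (Wz * b - Wz * a) := by
        intro Wz a b c hb
        field_simp
      rw [hT]
      exact key (W z) (Phi (m+1) p z) (Phi (m+1) q z) (p/(q-p)) hΦq0
    have hWqT_int : IntegrableOn (fun z => W z * Phi (m+1) q z * T p z) (Set.Ioi (0:ℝ)) := by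
      apply (((hWq_int.sub hWp_int).const_mul (p/(q-p))).congr _)
      filter_upwards [ae_restrict_mem measurableSet_Ioi] with z hz
      exact (hWqT_eq z hz).symm
    have hWqT_val : ∫ z in Set.Ioi (0:ℝ), W z * Phi (m+1) q z * T p z = 0 := by
      rw [setIntegral_congr_fun measurableSet_Ioi hWqT_eq, integral_const_mul,
        integral_sub hWq_int hWp_int, hWq_val, hWp_val]
      ring
    have haesm_log : AEStronglyMeasurable
        (fun z => W z * Phi (m+1) q z * Real.log (1 + T p z))
        (volume.restrict (Set.Ioi (0:ℝ))) := aesm_Wq.mul (hlog_meas p hp0.le)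
    have hlog_int : IntegrableOn (fun z => W z * Phi (m+1) q z * Real.log (1 + T p z))
        (Set.Ioi (0:ℝ)) := by
      apply Integrable.mono (hWq_int.mul_const (2*(p*K))) haesm_log
      filter_upwards [ae_restrict_mem measurableSet_Ioi] with z hz
      have hz0 : (0:ℝ) < z := hz
      have hΦq0 : 0 < Phi (m+1) q z := Phi_pos hq.le hz0.le
      have hWΦ : 0 ≤ W z * Phi (m+1) q z := mul_nonneg (hWnn z hz0) hΦq0.le
      have hTb : |T p z| ≤ 1/2 := le_trans (htb z hz0) hhalf
      rw [Real.norm_eq_abs, Real.norm_eq_abs, abs_mul, abs_of_nonneg hWΦ]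
      rw [abs_of_nonneg (by positivity : (0:ℝ) ≤ W z * Phi (m+1) q z * (2*(p*K)))]
      apply mul_le_mul_of_nonneg_left _ hWΦ
      calc |Real.log (1 + T p z)| ≤ 2*|T p z| := log_abs_bound hTb
        _ ≤ 2*(p*K) := by have := htb z hz0; linarith
    have hA : IntegrableOn
        (fun z => W z * Phi (m+1) q z * (Real.log (1 + T p z) - T p z)) (Set.Ioi (0:ℝ)) := by
      apply Integrable.congr (hlog_int.sub hWqT_int)
      filter_upwards with z
      simp only [Pi.sub_apply]
      ring
    have hsplit : (∫ z in Set.Ioi (0:ℝ), W z * Phi (m+1) q z * Real.log (1 + T p z))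
        = ∫ z in Set.Ioi (0:ℝ), W z * Phi (m+1) q z * (Real.log (1 + T p z) - T p z) := by
      have h1 : (∫ z in Set.Ioi (0:ℝ), W z * Phi (m+1) q z * Real.log (1 + T p z))
          = ∫ z in Set.Ioi (0:ℝ), (W z * Phi (m+1) q z * (Real.log (1 + T p z) - T p z)
            + W z * Phi (m+1) q z * T p z) := by
        apply setIntegral_congr_fun measurableSet_Ioi
        intro z hz
        ring
      rw [h1, integral_add hA hWqT_int, hWqT_val, add_zero]
    rw [hD p hp.1 hp.2, hsplit]
    simp only [hG]
    rw [integral_div, integral_neg]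
  -- Step B : dominated convergence
  set L : ℝ → ℝ :=
    fun z => W z * Phi (m+1) q z * (1 - Real.exp (-z) / Phi (m+1) q z)^2 / (2*q^2) with hL
  have hdct : Tendsto (fun p => ∫ z in Set.Ioi (0:ℝ), G p z) l
      (nhds (∫ z in Set.Ioi (0:ℝ), L z)) := by
    apply tendsto_integral_filter_of_dominated_convergence
      (fun z => W z * Phi (m+1) q z * (2*K^2))
    · filter_upwards [hev] with p ⟨hp, hpδ⟩
      have h0 : AEStronglyMeasurable
          (fun z => W z * Phi (m+1) q z * (Real.log (1 + T p z) - T p z))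
          (volume.restrict (Set.Ioi (0:ℝ))) :=
        aesm_Wq.mul ((hlog_meas p hp.1.le).sub (hT_meas p hp.1.le))
      have hneg : AEStronglyMeasurable
          (fun z => -(W z * Phi (m+1) q z * (Real.log (1 + T p z) - T p z)))
          (volume.restrict (Set.Ioi (0:ℝ))) := h0.neg
      apply (hneg.const_mul ((p^2)⁻¹)).congr
      filter_upwards with z
      simp only [hG]
      rw [div_eq_inv_mul]
    · filter_upwards [hev] with p ⟨hp, hpδ⟩
      filter_upwards [ae_restrict_mem measurableSet_Ioi] with z hz
      have hz0 : (0:ℝ) < z := hz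
      have hp0 : 0 < p := hp.1
      have hΦq0 : 0 < Phi (m+1) q z := Phi_pos hq.le hz0.le
      have hWz : 0 ≤ W z := hWnn z hz0
      have hTb : |T p z| ≤ p*K := keyT p hp hpδ z hz0
      have hTh : |T p z| ≤ 1/2 := le_trans hTb (keyhalf p hp0 hpδ)
      have hsq : (T p z)^2 ≤ (p*K)^2 := by
        rw [← sq_abs]
        apply pow_le_pow_left₀ (abs_nonneg _) hTb
      have h1 : |Real.log (1 + T p z) - T p z| ≤ (3/2)*(p*K)^2 := by
        calc |Real.log (1 + T p z) - T p z| ≤ (3/2)*(T p z)^2 := log_sub_bound hTh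
          _ ≤ (3/2)*(p*K)^2 := by linarith
      have hGabs : ‖G p z‖ = W z * Phi (m+1) q z * |Real.log (1 + T p z) - T p z| / p^2 := by
        simp only [hG, Real.norm_eq_abs, abs_div, abs_neg, abs_mul]
        rw [abs_of_nonneg hWz, abs_of_nonneg hΦq0.le, abs_of_nonneg (sq_nonneg p)]
      rw [hGabs]
      have hp2 : (0:ℝ) < p^2 := by positivity
      calc W z * Phi (m+1) q z * |Real.log (1 + T p z) - T p z| / p^2
          ≤ W z * Phi (m+1) q z * ((3/2)*(p*K)^2) / p^2 := by
            gcongr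
          _ = W z * Phi (m+1) q z * ((3/2)*K^2) := by
            field_simp
          _ ≤ W z * Phi (m+1) q z * (2*K^2) := by
            apply mul_le_mul_of_nonneg_left _ (by positivity)
            nlinarith [sq_nonneg K]
    · exact hWq_int.mul_const _
    · filter_upwards [ae_restrict_mem measurableSet_Ioi] with z hz
      have hz0 : (0:ℝ) < z := hz
      have hΦq0 : 0 < Phi (m+1) q z := Phi_pos hq.le hz0.le
      have hTdiv : Tendsto (fun p => T p z / p) l
          (nhds ((1 - Real.exp (-z) / Phi (m+1) q z) / q)) := by
        have h1 : Tendsto (fun p : ℝ => 1/(q-p)) l (nhds (1/q)) := by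
          have hc : ContinuousAt (fun p : ℝ => 1/(q-p)) 0 := by
            apply ContinuousAt.div continuousAt_const
              ((continuous_const.sub continuous_id).continuousAt)
            simpa using hq.ne'
          have h := hc.tendsto.mono_left hl
          beta_reduce at h
          rw [sub_zero] at h
          exact h
        have h2 : Tendsto (fun p => 1 - Phi (m+1) p z / Phi (m+1) q z) l
            (nhds (1 - Real.exp (-z) / Phi (m+1) q z)) :=
          tendsto_const_nhds.sub ((Phi_tendsto (m+1) hq hz0.le).div_const _)
        have h3 := h1.mul h2
        have hval : 1/q * (1 - Real.exp (-z) / Phi (m+1) q z)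
            = (1 - Real.exp (-z) / Phi (m+1) q z) / q := by
          rw [one_div, inv_mul_eq_div]
        rw [hval] at h3
        apply Tendsto.congr' _ h3
        filter_upwards [hev] with p ⟨hp, hpδ⟩
        have hp0 : p ≠ 0 := hp.1.ne'
        have hqp : q - p ≠ 0 := by
          have := hp.2
          intro hcon
          nlinarith [hp.1]
        have key : ∀ pp qq X : ℝ, pp ≠ 0 → qq ≠ 0 → 1/qq * X = (pp/qq * X)/pp := by
          intro pp qq X h1 h2
          field_simp
        rw [hT]
        exact key p (q-p) (1 - Phi (m+1) p z / Phi (m+1) q z) hp0 hqp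
      have hid : ∀ p : ℝ, G p z
          = -(W z * Phi (m+1) q z * (Real.log (1 + T p z) - T p z + (T p z)^2/2))/p^2
            + (W z * Phi (m+1) q z / 2) * (T p z / p)^2 := by
        intro p
        simp only [hG]
        rw [div_pow]
        ring
      have hterm2 : Tendsto (fun p => (W z * Phi (m+1) q z / 2) * (T p z / p)^2) l
          (nhds ((W z * Phi (m+1) q z / 2) * ((1 - Real.exp (-z) / Phi (m+1) q z) / q)^2)) :=
        tendsto_const_nhds.mul (hTdiv.pow 2)
      have hterm1 : Tendsto
          (fun p => -(W z * Phi (m+1) q z * (Real.log (1 + T p z) - T p z + (T p z)^2/2))/p^2)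
          l (nhds 0) := by
        apply squeeze_zero_norm' (a := fun p => (W z * Phi (m+1) q z) * (2*K^3) * p)
        · filter_upwards [hev] with p ⟨hp, hpδ⟩
          have hp0 : 0 < p := hp.1
          have hWz : 0 ≤ W z := hWnn z hz0
          have hTb : |T p z| ≤ p*K := keyT p hp hpδ z hz0
          have hTh : |T p z| ≤ 1/2 := le_trans hTb (keyhalf p hp0 hpδ)
          have hlog3 : |Real.log (1 + T p z) - T p z + (T p z)^2/2| ≤ 2*|T p z|^3 :=
            log_taylor_bound hTh
          have hcube : |T p z|^3 ≤ (p*K)^3 := pow_le_pow_left₀ (abs_nonneg _) hTb 3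
          have habs : ‖-(W z * Phi (m+1) q z * (Real.log (1 + T p z) - T p z + (T p z)^2/2))/p^2‖
              = W z * Phi (m+1) q z * |Real.log (1 + T p z) - T p z + (T p z)^2/2| / p^2 := by
            rw [Real.norm_eq_abs, abs_div, abs_neg, abs_mul, abs_mul]
            rw [abs_of_nonneg hWz, abs_of_nonneg hΦq0.le, abs_of_nonneg (sq_nonneg p)]
          rw [habs]
          have hp2 : (0:ℝ) < p^2 := by positivity
          calc W z * Phi (m+1) q z * |Real.log (1 + T p z) - T p z + (T p z)^2/2| / p^2
              ≤ W z * Phi (m+1) q z * (2*(p*K)^3) / p^2 := by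
                gcongr
                linarith
            _ = W z * Phi (m+1) q z * (2*K^3) * p := by
                field_simp
        · have hid0 : Tendsto (fun p : ℝ => p) l (nhds 0) := hl
          have := hid0.const_mul ((W z * Phi (m+1) q z) * (2*K^3))
          simpa using this
      have hsum := hterm1.add hterm2
      rw [zero_add] at hsum
      have hfin := hsum.congr (fun p => (hid p).symm)
      have hvalL : (W z * Phi (m+1) q z / 2) * ((1 - Real.exp (-z) / Phi (m+1) q z) / q)^2
          = L z := by
        simp only [hL]
        have hgen : ∀ C X qq : ℝ, qq ≠ 0 → (C / 2) * (X / qq)^2 = C * X^2 / (2*qq^2) := by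
          intro C X qq hqq
          field_simp
        exact hgen (W z * Phi (m+1) q z) (1 - Real.exp (-z) / Phi (m+1) q z) q hq.ne'
      rwa [hvalL] at hfin
  -- Step C : value of the limit integral
  have hI2_int : IntegrableOn (fun z => W z * Real.exp (-z)) (Set.Ioi (0:ℝ)) := by
    apply ((integrableOn_pow_exp m one_pos).const_mul (1/(Nat.factorial m : ℝ))).congr
    filter_upwards with z
    simp only [hW, one_mul]
    ring
  have hI2_val : ∫ z in Set.Ioi (0:ℝ), W z * Real.exp (-z) = 1 := by
    have h := integral_pow_exp m one_pos
    have h1 : (∫ z in Set.Ioi (0:ℝ), W z * Real.exp (-z))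
        = ∫ z in Set.Ioi (0:ℝ), 1/(Nat.factorial m : ℝ) * (z^m * Real.exp (-(1*z))) := by
      apply setIntegral_congr_fun measurableSet_Ioi
      intro z hz
      simp only [hW, one_mul]
      ring
    rw [h1, integral_const_mul, h]
    have hfac : (Nat.factorial m : ℝ) ≠ 0 := by positivity
    field_simp
    rw [one_pow]
  have hI3_int : IntegrableOn (fun z => W z * Real.exp (-(2*z)) / Phi (m+1) q z)
      (Set.Ioi (0:ℝ)) := by
    have haesm : AEStronglyMeasurable (fun z => W z * Real.exp (-(2*z)) / Phi (m+1) q z)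
        (volume.restrict (Set.Ioi (0:ℝ))) := by
      have hc : AEStronglyMeasurable (fun z => W z * Real.exp (-(2*z)))
          (volume.restrict (Set.Ioi (0:ℝ))) :=
        (hWcont.mul (Real.continuous_exp.comp
          (continuous_const.mul continuous_id).neg)).aestronglyMeasurable
      have h1 : AEStronglyMeasurable (fun z => (W z * Real.exp (-(2*z))) * (Phi (m+1) q z)⁻¹)
          (volume.restrict (Set.Ioi (0:ℝ))) :=
        hc.mul (hmeas_q.aemeasurable.inv.aestronglyMeasurable)
      apply h1.congr
      filter_upwards with z
      rw [div_eq_mul_inv]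
    apply Integrable.mono (hI2_int.mul_const (Real.exp 1 * (1+q)^(m+1))) haesm
    filter_upwards [ae_restrict_mem measurableSet_Ioi] with z hz
    have hz0 : (0:ℝ) < z := hz
    have hΦq0 : 0 < Phi (m+1) q z := Phi_pos hq.le hz0.le
    have hWz : 0 ≤ W z := hWnn z hz0
    have hlow := Phi_ge_exp (n := m+1) (x := q) (z := z) hq.le hz0.le
    have hc0 : (0:ℝ) < Real.exp (-1) * ((1+q)^(m+1))⁻¹ * Real.exp (-z) := by positivity
    have hinv : (Phi (m+1) q z)⁻¹ ≤ (Real.exp (-1) * ((1+q)^(m+1))⁻¹ * Real.exp (-z))⁻¹ :=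
      inv_anti₀ hc0 hlow
    have hinv2 : (Real.exp (-1) * ((1+q)^(m+1))⁻¹ * Real.exp (-z))⁻¹
        = Real.exp 1 * (1+q)^(m+1) * Real.exp z := by
      rw [mul_inv, mul_inv, inv_inv, Real.exp_neg, Real.exp_neg, inv_inv, inv_inv]
    rw [Real.norm_eq_abs, Real.norm_eq_abs]
    have he2 : Real.exp (-(2*z)) * Real.exp z = Real.exp (-z) := by
      rw [← Real.exp_add]
      congr 1
      ring
    have hrhs : |W z * Real.exp (-z) * (Real.exp 1 * (1+q)^(m+1))|
        = W z * Real.exp (-z) * (Real.exp 1 * (1+q)^(m+1)) := by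
      apply abs_of_nonneg
      positivity
    rw [hrhs]
    rw [abs_of_nonneg (by positivity : (0:ℝ) ≤ W z * Real.exp (-(2*z)) / Phi (m+1) q z)]
    rw [div_eq_mul_inv]
    calc W z * Real.exp (-(2*z)) * (Phi (m+1) q z)⁻¹
        ≤ W z * Real.exp (-(2*z)) * (Real.exp 1 * (1+q)^(m+1) * Real.exp z) := by
          apply mul_le_mul_of_nonneg_left _ (by positivity)
          rw [← hinv2]
          exact hinv
      _ = W z * Real.exp (-z) * (Real.exp 1 * (1+q)^(m+1)) := by
          rw [← he2]
          ring
  have hI3_val : ∫ z in Set.Ioi (0:ℝ), W z * Real.exp (-(2*z)) / Phi (m+1) q z = ζ + 1 := by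
    rw [hζ]
    ring
  have hLval : ∫ z in Set.Ioi (0:ℝ), L z = ζ / (2*q^2) := by
    have hkey : ∀ Wz u b qq : ℝ, b ≠ 0 → qq ≠ 0 →
        Wz*b*(1 - u/b)^2/(2*qq^2) = (1/(2*qq^2))*(Wz*b - 2*(Wz*u) + Wz*(u*u)/b) := by
      intro Wz u b qq hb hqq
      field_simp
      ring
    have hLeq : ∀ z ∈ Set.Ioi (0:ℝ), L z
        = (1/(2*q^2))*(W z * Phi (m+1) q z - 2*(W z * Real.exp (-z))
          + W z * Real.exp (-(2*z)) / Phi (m+1) q z) := by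
      intro z hz
      have hz0 : (0:ℝ) < z := hz
      have hΦq0 : Phi (m+1) q z ≠ 0 := (Phi_pos hq.le hz0.le).ne'
      have he2 : Real.exp (-(2*z)) = Real.exp (-z) * Real.exp (-z) := by
        rw [← Real.exp_add]
        congr 1
        ring
      simp only [hL]
      rw [he2]
      exact hkey (W z) (Real.exp (-z)) (Phi (m+1) q z) q hΦq0 hq.ne'
    rw [setIntegral_congr_fun measurableSet_Ioi hLeq, integral_const_mul]
    have hAB : IntegrableOn (fun z => W z * Phi (m+1) q z - 2*(W z * Real.exp (-z)))
        (Set.Ioi (0:ℝ)) := hWq_int.sub (hI2_int.const_mul 2)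
    rw [integral_add hAB hI3_int, integral_sub hWq_int (hI2_int.const_mul 2),
      integral_const_mul, hWq_val, hI2_val, hI3_val]
    field_simp
    ring
  rw [hLval] at hdct
  have hee : (fun p => ∫ z in Set.Ioi (0:ℝ), G p z) =ᶠ[l] (fun p => D p / p^2) :=
    hDeq.mono (fun p h => h.symm)
  exact Tendsto.congr' hee hdct
end
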